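/- Let K be an algebraically closed field of characteristic p > 2 and let M ≥ m ≥ 1, N ≥ n ≥ 1. The evaluation homomorphism p_e maps the algebra A_ns(M|N) into the algebra A_ns(m|n). -/

import Mathlib

open MvPolynomial

noncomputable section

/-- The substitution `x_m = y_n = T`, landing in polynomials in `T` over the original ring
(the image only involves the remaining variables). -/
def psiSub (K : Type*) [CommSemiring K] (m n : ℕ) :
    MvPolynomial (Fin m ⊕ Fin n) K →ₐ[K] Polynomial (MvPolynomial (Fin m ⊕ Fin n) K) :=
  MvPolynomial.aeval (Sum.elim
    (fun i : Fin m => if (i : ℕ) = m - 1 then Polynomial.X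
      else Polynomial.C (MvPolynomial.X (Sum.inl i)))
    (fun j : Fin n => if (j : ℕ) = n - 1 then Polynomial.X
      else Polynomial.C (MvPolynomial.X (Sum.inr j))))

/-- `f` is supersymmetric: symmetric in the `x` and `y` variables separately, and
`(d/dT) f|_{x_m = y_n = T} = 0`. -/
def IsSupersymmetric (K : Type*) [CommSemiring K] (m n : ℕ)
    (f : MvPolynomial (Fin m ⊕ Fin n) K) : Prop :=
  (∀ σ : Equiv.Perm (Fin m), MvPolynomial.rename (Sum.map σ id) f = f) ∧
  (∀ τ : Equiv.Perm (Fin n), MvPolynomial.rename (Sum.map id τ) f = f) ∧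
  Polynomial.derivative (psiSub K m n f) = 0

/-- `c_r(x|y) = Σ_{i=0}^{min(r,m)} (−1)^{r−i} σ_i(x) h_{r−i}(y)`. -/
def cpoly (K : Type*) [CommRing K] (m n r : ℕ) : MvPolynomial (Fin m ⊕ Fin n) K :=
  ∑ i ∈ Finset.range (min r m + 1),
    (-1 : MvPolynomial (Fin m ⊕ Fin n) K) ^ (r - i) *
      (MvPolynomial.rename Sum.inl (MvPolynomial.esymm (Fin m) K i)) *
      (MvPolynomial.rename Sum.inr (MvPolynomial.hsymm (Fin n) K (r - i)))

/-- σ_i(x_1,…,x_m), viewed in K[x_1,…,x_m,y_1,…,y_n]. -/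
def sigmaX (K : Type*) [CommSemiring K] (m n i : ℕ) : MvPolynomial (Fin m ⊕ Fin n) K :=
  MvPolynomial.rename Sum.inl (MvPolynomial.esymm (Fin m) K i)

/-- σ_j(y_1,…,y_n), viewed in K[x_1,…,x_m,y_1,…,y_n]. -/
def sigmaY (K : Type*) [CommSemiring K] (m n j : ℕ) : MvPolynomial (Fin m ⊕ Fin n) K :=
  MvPolynomial.rename Sum.inr (MvPolynomial.esymm (Fin n) K j)

/-- The generators of the algebra `A_ns(m|n)` of nice supersymmetric polynomials:
`c_r` (r ≥ 0), `σ_i(x)^p` (1 ≤ i ≤ m), `σ_j(y)^p` (1 ≤ j ≤ n) and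
`u_k = σ_m(x)^k σ_n(y)^{p-k}` (0 < k < p). -/
def nsGens (K : Type*) [CommRing K] (p m n : ℕ) : Set (MvPolynomial (Fin m ⊕ Fin n) K) :=
  {f | ∃ r : ℕ, f = cpoly K m n r} ∪
  {f | ∃ i : ℕ, 1 ≤ i ∧ i ≤ m ∧ f = (sigmaX K m n i) ^ p} ∪
  {f | ∃ j : ℕ, 1 ≤ j ∧ j ≤ n ∧ f = (sigmaY K m n j) ^ p} ∪
  {f | ∃ k : ℕ, 0 < k ∧ k < p ∧ f = (sigmaX K m n m) ^ k * (sigmaY K m n n) ^ (p - k)}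

/-- The evaluation morphism `p_e` sending `x_i ↦ x_i` (i ≤ m), `y_j ↦ y_j` (j ≤ n) and the
remaining variables to `0`. -/
def pe (K : Type*) [CommSemiring K] (M N m n : ℕ) :
    MvPolynomial (Fin M ⊕ Fin N) K →ₐ[K] MvPolynomial (Fin m ⊕ Fin n) K :=
  MvPolynomial.aeval (Sum.elim
    (fun i : Fin M => if h : (i : ℕ) < m then MvPolynomial.X (Sum.inl ⟨(i : ℕ), h⟩) else 0)
    (fun j : Fin N => if h : (j : ℕ) < n then MvPolynomial.X (Sum.inr ⟨(j : ℕ), h⟩) else 0))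

end


noncomputable section AuxLemmas

open Finset

variable {K : Type*} [CommRing K] {A : Type*} [CommRing A] [Algebra K A]

lemma aeval_esymm_ext {m M : ℕ} (hM : m ≤ M) (f : Fin m → A) (i : ℕ) :
    MvPolynomial.aeval
      (fun j : Fin M => if h : (j : ℕ) < m then f ⟨(j : ℕ), h⟩ else 0)
      (MvPolynomial.esymm (Fin M) K i)
    = MvPolynomial.aeval f (MvPolynomial.esymm (Fin m) K i) := by
  classical
  set g : Fin M → A := fun j => if h : (j : ℕ) < m then f ⟨(j : ℕ), h⟩ else 0 with hg
  have hL : MvPolynomial.aeval (R := K) g (MvPolynomial.esymm (Fin M) K i)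
      = ∑ t ∈ powersetCard i (univ : Finset (Fin M)), ∏ j ∈ t, g j := by
    simp [MvPolynomial.esymm, map_sum, map_prod]
  have hR : MvPolynomial.aeval (R := K) f (MvPolynomial.esymm (Fin m) K i)
      = ∑ t ∈ powersetCard i (univ : Finset (Fin m)), ∏ j ∈ t, f j := by
    simp [MvPolynomial.esymm, map_sum, map_prod]
  rw [hL, hR]
  set e : Fin m ↪ Fin M := Fin.castLEEmb hM with he
  have hmem : ∀ j : Fin M, j ∈ (univ : Finset (Fin m)).map e ↔ (j : ℕ) < m := by
    intro j
    simp only [mem_map, mem_univ, true_and]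
    constructor
    · rintro ⟨a, rfl⟩; exact a.2
    · intro h; exact ⟨⟨(j : ℕ), h⟩, by simp [he, Fin.ext_iff]⟩
  rw [← Finset.sum_subset
      (Finset.powersetCard_mono (subset_univ ((univ : Finset (Fin m)).map e)))
      (fun t ht hts => ?_)]
  · rw [Finset.powersetCard_map, Finset.sum_map]
    refine Finset.sum_congr rfl fun t ht => ?_
    rw [show ((Finset.mapEmbedding e).toEmbedding t : Finset (Fin M)) = t.map e from rfl,
      Finset.prod_map]
    refine Finset.prod_congr rfl fun j hj => ?_
    show g (e j) = f j
    have h1 : ((e j : Fin M) : ℕ) < m := j.2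
    rw [hg]
    simp only [h1, dif_pos]
    exact congrArg f (Fin.ext (by simp [he]))
  · rw [Finset.mem_powersetCard] at ht
    have hnsub : ¬ t ⊆ (univ : Finset (Fin m)).map e := fun hsub =>
      hts (Finset.mem_powersetCard.2 ⟨hsub, ht.2⟩)
    obtain ⟨j, hj, hjm⟩ := Finset.not_subset.1 hnsub
    refine Finset.prod_eq_zero hj ?_
    rw [hg]
    simp [(hmem j).not.1 hjm]

lemma aeval_hsymm_ext {n N : ℕ} (hn : 1 ≤ n) (hN : n ≤ N) (f : Fin n → A) (r : ℕ) :
    MvPolynomial.aeval (fun j : Fin N => if h : (j : ℕ) < n then f ⟨(j : ℕ), h⟩ else 0)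
      (MvPolynomial.hsymm (Fin N) K r)
    = MvPolynomial.aeval f (MvPolynomial.hsymm (Fin n) K r) := by
  classical
  set g : Fin N → A := fun j => if h : (j : ℕ) < n then f ⟨(j : ℕ), h⟩ else 0 with hg
  have key : ∀ {σ : Type} [Fintype σ] [DecidableEq σ] (u : σ → A),
      MvPolynomial.aeval (R := K) u (MvPolynomial.hsymm σ K r)
      = ∑ s : Sym σ r, ((s : Multiset σ).map u).prod := by
    intro σ _ _ u
    rw [MvPolynomial.hsymm, map_sum]
    refine Finset.sum_congr rfl fun s _ => ?_
    rw [map_multiset_prod, Multiset.map_map]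
    congr 1
    exact Multiset.map_congr rfl fun a _ => by simp
  rw [key g, key f]
  set e : Fin n → Fin N := Fin.castLE hN with he
  have hei : Function.Injective e := fun a b h => by
    simpa [he, Fin.ext_iff] using congrArg (fun x : Fin N => (x : ℕ)) h
  set φ : Sym (Fin n) r → Sym (Fin N) r := Sym.map e with hφdef
  have hφ : Function.Injective φ := Sym.map_injective hei r
  rw [← Finset.sum_subset
      (Finset.subset_univ ((Finset.univ : Finset (Sym (Fin n) r)).image φ))
      (fun s _ hs => ?_)]
  · rw [Finset.sum_image (fun a _ b _ h => hφ h)]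
    refine Finset.sum_congr rfl fun t _ => ?_
    rw [hφdef]
    simp only [Sym.coe_map, Multiset.map_map]
    congr 1
    refine Multiset.map_congr rfl fun a _ => ?_
    show g (e a) = f a
    have h1 : ((e a : Fin N) : ℕ) < n := a.2
    rw [hg]
    simp only [h1, dif_pos]
    exact congrArg f (Fin.ext (by simp [he]))
  · by_contra hprod
    apply hs
    have hall : ∀ a ∈ (s : Multiset (Fin N)), (a : ℕ) < n := by
      by_contra hc
      push_neg at hc
      obtain ⟨a, ha, han⟩ := hc
      refine hprod (Multiset.prod_eq_zero ?_)
      refine Multiset.mem_map.2 ⟨a, ha, ?_⟩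
      rw [hg]; simp [han]
    set d : Fin N → Fin n := fun a => if h : (a : ℕ) < n then ⟨(a : ℕ), h⟩ else ⟨0, hn⟩ with hd
    refine Finset.mem_image.2 ⟨Sym.map d s, Finset.mem_univ _, ?_⟩
    rw [hφdef, Sym.map_map]
    have : Sym.map (e ∘ d) s = Sym.map id s := by
      refine Sym.map_congr fun a ha => ?_
      have h1 := hall a ha
      simp [he, hd, h1, Fin.ext_iff]
    rw [this, Sym.map_id]

end AuxLemmas

noncomputable section PeLemmas

variable (K : Type*) [CommRing K]

lemma pe_rename_esymm {M N m n : ℕ} (hM : m ≤ M) (i : ℕ) :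
    pe K M N m n (MvPolynomial.rename Sum.inl (MvPolynomial.esymm (Fin M) K i))
      = MvPolynomial.rename Sum.inl (MvPolynomial.esymm (Fin m) K i) := by
  rw [pe, MvPolynomial.aeval_rename, Sum.elim_comp_inl]
  have h2 : (MvPolynomial.rename Sum.inl (MvPolynomial.esymm (Fin m) K i)
        : MvPolynomial (Fin m ⊕ Fin n) K)
      = MvPolynomial.aeval (fun a : Fin m => MvPolynomial.X (Sum.inl a))
        (MvPolynomial.esymm (Fin m) K i) :=
      by
      rw [show (MvPolynomial.rename Sum.inl : MvPolynomial (Fin m) K →ₐ[K] MvPolynomial (Fin m ⊕ Fin n) K)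
        = MvPolynomial.aeval (fun a : Fin m => MvPolynomial.X (Sum.inl a)) from
        MvPolynomial.algHom_ext fun a => by simp]
  rw [h2, ← aeval_esymm_ext (K := K) hM
    (fun a : Fin m => (MvPolynomial.X (Sum.inl a) : MvPolynomial (Fin m ⊕ Fin n) K)) i]

lemma pe_rename_esymmY {M N m n : ℕ} (hN : n ≤ N) (j : ℕ) :
    pe K M N m n (MvPolynomial.rename Sum.inr (MvPolynomial.esymm (Fin N) K j))
      = MvPolynomial.rename Sum.inr (MvPolynomial.esymm (Fin n) K j) := by
  rw [pe, MvPolynomial.aeval_rename, Sum.elim_comp_inr]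
  have h2 : (MvPolynomial.rename Sum.inr (MvPolynomial.esymm (Fin n) K j)
        : MvPolynomial (Fin m ⊕ Fin n) K)
      = MvPolynomial.aeval (fun a : Fin n => MvPolynomial.X (Sum.inr a))
        (MvPolynomial.esymm (Fin n) K j) :=
      by
      rw [show (MvPolynomial.rename Sum.inr : MvPolynomial (Fin n) K →ₐ[K] MvPolynomial (Fin m ⊕ Fin n) K)
        = MvPolynomial.aeval (fun a : Fin n => MvPolynomial.X (Sum.inr a)) from
        MvPolynomial.algHom_ext fun a => by simp]
  rw [h2, ← aeval_esymm_ext (K := K) hN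
    (fun a : Fin n => (MvPolynomial.X (Sum.inr a) : MvPolynomial (Fin m ⊕ Fin n) K)) j]

lemma pe_rename_hsymm {M N m n : ℕ} (hn : 1 ≤ n) (hN : n ≤ N) (r : ℕ) :
    pe K M N m n (MvPolynomial.rename Sum.inr (MvPolynomial.hsymm (Fin N) K r))
      = MvPolynomial.rename Sum.inr (MvPolynomial.hsymm (Fin n) K r) := by
  rw [pe, MvPolynomial.aeval_rename, Sum.elim_comp_inr]
  have h2 : (MvPolynomial.rename Sum.inr (MvPolynomial.hsymm (Fin n) K r)
        : MvPolynomial (Fin m ⊕ Fin n) K)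
      = MvPolynomial.aeval (fun a : Fin n => MvPolynomial.X (Sum.inr a))
        (MvPolynomial.hsymm (Fin n) K r) :=
      by
      rw [show (MvPolynomial.rename Sum.inr : MvPolynomial (Fin n) K →ₐ[K] MvPolynomial (Fin m ⊕ Fin n) K)
        = MvPolynomial.aeval (fun a : Fin n => MvPolynomial.X (Sum.inr a)) from
        MvPolynomial.algHom_ext fun a => by simp]
  rw [h2, ← aeval_hsymm_ext (K := K) hn hN
    (fun a : Fin n => (MvPolynomial.X (Sum.inr a) : MvPolynomial (Fin m ⊕ Fin n) K)) r]

lemma pe_sigmaX' {M N m n : ℕ} (hM : m ≤ M) (i : ℕ) :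
    pe K M N m n (sigmaX K M N i) = sigmaX K m n i :=
  pe_rename_esymm K hM i

lemma pe_sigmaY' {M N m n : ℕ} (hN : n ≤ N) (j : ℕ) :
    pe K M N m n (sigmaY K M N j) = sigmaY K m n j :=
  pe_rename_esymmY K hN j

lemma esymm_eq_zero_of_lt {m i : ℕ} (hmi : m < i) :
    MvPolynomial.esymm (Fin m) K i = 0 := by
  rw [MvPolynomial.esymm, Finset.powersetCard_eq_empty.2 (by simpa using hmi),
    Finset.sum_empty]

lemma sigmaX_eq_zero {m n i : ℕ} (hmi : m < i) : sigmaX K m n i = 0 := by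
  rw [sigmaX, esymm_eq_zero_of_lt K hmi, map_zero]

lemma sigmaY_eq_zero {m n j : ℕ} (hnj : n < j) : sigmaY K m n j = 0 := by
  rw [sigmaY, esymm_eq_zero_of_lt K hnj, map_zero]

lemma pe_cpoly {M N m n : ℕ} (hm : 1 ≤ m) (hn : 1 ≤ n) (hM : m ≤ M) (hN : n ≤ N) (r : ℕ) :
    pe K M N m n (cpoly K M N r) = cpoly K m n r := by
  rw [cpoly, map_sum, cpoly]
  have hterm : ∀ i, pe K M N m n
      ((-1 : MvPolynomial (Fin M ⊕ Fin N) K) ^ (r - i) *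
        (MvPolynomial.rename Sum.inl (MvPolynomial.esymm (Fin M) K i)) *
        (MvPolynomial.rename Sum.inr (MvPolynomial.hsymm (Fin N) K (r - i))))
      = (-1 : MvPolynomial (Fin m ⊕ Fin n) K) ^ (r - i) *
        (MvPolynomial.rename Sum.inl (MvPolynomial.esymm (Fin m) K i)) *
        (MvPolynomial.rename Sum.inr (MvPolynomial.hsymm (Fin n) K (r - i))) := by
    intro i
    rw [map_mul, map_mul, map_pow, map_neg, map_one, pe_rename_esymm K hM i,
      pe_rename_hsymm K hn hN (r - i)]
  rw [Finset.sum_congr rfl fun i _ => hterm i]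
  refine (Finset.sum_subset (Finset.range_subset_range.2 (by omega)) fun i hiM him => ?_).symm
  rw [Finset.mem_range] at hiM him
  have hmi : m < i := by omega
  rw [esymm_eq_zero_of_lt K hmi, map_zero, mul_zero, zero_mul]

end PeLemmas

noncomputable section

/-- **Lemma 1.1.** The evaluation morphism `p_e` maps `A_ns(M|N)` into `A_ns(m|n)`. -/
theorem pe_maps_Ans_into_Ans (K : Type*) [Field K] [IsAlgClosed K]
    (p : ℕ) [CharP K p] (hp : 2 < p) (M N m n : ℕ)
    (hm : 1 ≤ m) (hn : 1 ≤ n) (hM : m ≤ M) (hN : n ≤ N) :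
    ∀ f ∈ Algebra.adjoin K (nsGens K p M N),
      pe K M N m n f ∈ Algebra.adjoin K (nsGens K p m n) := by
  intro f hf
  have h1 : pe K M N m n f ∈ (Algebra.adjoin K (nsGens K p M N)).map (pe K M N m n) :=
    Subalgebra.mem_map.2 ⟨f, hf, rfl⟩
  rw [AlgHom.map_adjoin] at h1
  refine Algebra.adjoin_le ?_ h1
  rintro _ ⟨g, hg, rfl⟩
  have hp0 : p ≠ 0 := by omega
  rcases hg with (((⟨r, rfl⟩ | ⟨i, hi1, hi2, rfl⟩) | ⟨j, hj1, hj2, rfl⟩) | ⟨k, hk1, hk2, rfl⟩)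
  · rw [pe_cpoly K hm hn hM hN]
    exact Algebra.subset_adjoin (Or.inl (Or.inl (Or.inl ⟨r, rfl⟩)))
  · rw [map_pow, pe_sigmaX' K hM]
    rcases le_or_gt i m with him | him
    · exact Algebra.subset_adjoin (Or.inl (Or.inl (Or.inr ⟨i, hi1, him, rfl⟩)))
    · rw [sigmaX_eq_zero K him, zero_pow hp0]
      exact Subalgebra.zero_mem _
  · rw [map_pow, pe_sigmaY' K hN]
    rcases le_or_gt j n with hjn | hjn
    · exact Algebra.subset_adjoin (Or.inl (Or.inr ⟨j, hj1, hjn, rfl⟩))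
    · rw [sigmaY_eq_zero K hjn, zero_pow hp0]
      exact Subalgebra.zero_mem _
  · rw [map_mul, map_pow, map_pow, pe_sigmaX' K hM, pe_sigmaY' K hN]
    by_cases hMm : M = m
    · by_cases hNn : N = n
      · subst hMm; subst hNn
        exact Algebra.subset_adjoin (Or.inr ⟨k, hk1, hk2, rfl⟩)
      · rw [sigmaY_eq_zero K (by omega : n < N), zero_pow (by omega : p - k ≠ 0), mul_zero]
        exact Subalgebra.zero_mem _
    · rw [sigmaX_eq_zero K (by omega : m < M), zero_pow (by omega : k ≠ 0), zero_mul]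
      exact Subalgebra.zero_mem _


end
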